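/- Let ρ be an action of a 3-Lie algebra (g,[·,·,·]_g) on a 3-Lie algebra (h,[·,·,·]_h) and λ ∈ K. A linear map T : h → g is a relative Rota-Baxter operator of weight λ if and only if the linear map \bar{T} : g ⊕ h → g ⊕ h defined by \bar{T}(x + u) = x + Tu (i.e. the block matrix (Id, T; 0, 0)) is a Nijenhuis operator on the semidirect product 3-Lie algebra g ⋉_ρ h. -/

import Mathlib

/-- A 3-Lie algebra over a field `K`: a trilinear bracket that is alternating
(skew-symmetric) and satisfies the Fundamental Identity. -/
structure ThreeLieAlg (K : Type*) [Field K] (g : Type*) [AddCommGroup g] [Module K g] where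
  br : g →ₗ[K] g →ₗ[K] g →ₗ[K] g
  skew12 : ∀ x y z : g, br x y z = - br y x z
  skew23 : ∀ x y z : g, br x y z = - br x z y
  fund : ∀ x1 x2 x3 x4 x5 : g,
    br x1 x2 (br x3 x4 x5) =
      br (br x1 x2 x3) x4 x5 + br x3 (br x1 x2 x4) x5 + br x3 x4 (br x1 x2 x5)

/-- A representation of a 3-Lie algebra `(g, L)` on a vector space `V`. -/
structure ThreeLieRep (K : Type*) [Field K] (g : Type*) [AddCommGroup g] [Module K g]
    (L : ThreeLieAlg K g) (V : Type*) [AddCommGroup V] [Module K V] where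
  ρ : g →ₗ[K] g →ₗ[K] (V →ₗ[K] V)
  skew : ∀ x y : g, ρ x y = - ρ y x
  rep1 : ∀ (x1 x2 x3 x4 : g) (v : V),
    ρ x1 x2 (ρ x3 x4 v) =
      ρ (L.br x1 x2 x3) x4 v + ρ x3 (L.br x1 x2 x4) v + ρ x3 x4 (ρ x1 x2 v)
  rep2 : ∀ (x1 x2 x3 x4 : g) (v : V),
    ρ x1 (L.br x2 x3 x4) v =
      ρ x3 x4 (ρ x1 x2 v) - ρ x2 x4 (ρ x1 x3 v) + ρ x2 x3 (ρ x1 x4 v)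

/-- An action of a 3-Lie algebra `(g, L)` on a 3-Lie algebra `(h, H)`: a representation
on the underlying vector space of `h` such that `ρ(x,y)u` is central in `h` and
`ρ(x,y)` kills all brackets of `h`. -/
structure ThreeLieAction (K : Type*) [Field K]
    (g : Type*) [AddCommGroup g] [Module K g]
    (h : Type*) [AddCommGroup h] [Module K h]
    (L : ThreeLieAlg K g) (H : ThreeLieAlg K h)
    extends ThreeLieRep K g L h where
  central : ∀ (x y : g) (u v w : h), H.br (ρ x y u) v w = 0
  annih : ∀ (x y : g) (u v w : h), ρ x y (H.br u v w) = 0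

/-- `T : h → g` is a relative Rota-Baxter operator of weight `lam` with respect to the
action `A` of `(g, L)` on `(h, H)`. -/
def IsRRB {K : Type*} [Field K]
    {g : Type*} [AddCommGroup g] [Module K g]
    {h : Type*} [AddCommGroup h] [Module K h]
    {L : ThreeLieAlg K g} {H : ThreeLieAlg K h}
    (A : ThreeLieAction K g h L H) (lam : K) (T : h →ₗ[K] g) : Prop :=
  ∀ u v w : h,
    L.br (T u) (T v) (T w) =
      T (A.ρ (T u) (T v) w + A.ρ (T v) (T w) u + A.ρ (T w) (T u) v + lam • H.br u v w)

/-- The semidirect product bracket on `g × h` associated to an action `A` and weight `lam`. -/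
def sdBr {K : Type*} [Field K]
    {g : Type*} [AddCommGroup g] [Module K g]
    {h : Type*} [AddCommGroup h] [Module K h]
    {L : ThreeLieAlg K g} {H : ThreeLieAlg K h}
    (A : ThreeLieAction K g h L H) (lam : K) :
    g × h → g × h → g × h → g × h :=
  fun p q r =>
    (L.br p.1 q.1 r.1,
      A.ρ p.1 q.1 r.2 + A.ρ q.1 r.1 p.2 + A.ρ r.1 p.1 q.2 + lam • H.br p.2 q.2 r.2)

/-- The descendent bracket on `h` associated to a relative Rota-Baxter operator `T`. -/
def descBr {K : Type*} [Field K]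
    {g : Type*} [AddCommGroup g] [Module K g]
    {h : Type*} [AddCommGroup h] [Module K h]
    {L : ThreeLieAlg K g} {H : ThreeLieAlg K h}
    (A : ThreeLieAction K g h L H) (lam : K) (T : h →ₗ[K] g) :
    h → h → h → h :=
  fun u v w =>
    A.ρ (T u) (T v) w + A.ρ (T v) (T w) u + A.ρ (T w) (T u) v + lam • H.br u v w

/-- The map `ϱ(u,v)(x) = [Tu,Tv,x]_g - T(ρ(x,Tu)v + ρ(Tv,x)u)` induced by `T`. -/
def varrho {K : Type*} [Field K]
    {g : Type*} [AddCommGroup g] [Module K g]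
    {h : Type*} [AddCommGroup h] [Module K h]
    {L : ThreeLieAlg K g} {H : ThreeLieAlg K h}
    (A : ThreeLieAction K g h L H) (T : h →ₗ[K] g) :
    h → h → g → g :=
  fun u v x => L.br (T u) (T v) x - T (A.ρ x (T u) v + A.ρ (T v) x u)

/-- A Nijenhuis operator on a 3-Lie algebra with bracket `br`. -/
def IsNijenhuis {k : Type*} [AddCommGroup k] (br : k → k → k → k) (N : k → k) : Prop :=
  ∀ x y z : k,
    br (N x) (N y) (N z) =
      N (br (N x) (N y) z + br x (N y) (N z) + br (N x) y (N z)
        - N (br (N x) y z) - N (br x (N y) z) - N (br x y (N z))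
        + N (N (br x y z)))

/-- `T` is a relative Rota-Baxter operator of weight `lam` iff the map
`x + u ↦ x + Tu` on `g ⊕ h` is a Nijenhuis operator on the semidirect
product 3-Lie algebra. -/
theorem rrb_iff_nijenhuis
    (K : Type*) [Field K] [CharZero K]
    (g : Type*) [AddCommGroup g] [Module K g]
    (h : Type*) [AddCommGroup h] [Module K h]
    (L : ThreeLieAlg K g) (H : ThreeLieAlg K h)
    (A : ThreeLieAction K g h L H) (lam : K) (T : h →ₗ[K] g) :
    IsRRB A lam T ↔
      IsNijenhuis (sdBr A lam) (fun p : g × h => (p.1 + T p.2, 0)) := by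
  constructor
  · intro hT p q r
    obtain ⟨x, u⟩ := p
    obtain ⟨y, v⟩ := q
    obtain ⟨z, w⟩ := r
    have key := hT u v w
    simp only [sdBr, Prod.mk.injEq, Prod.fst_add, Prod.snd_add, Prod.fst_sub, Prod.snd_sub,
      map_add, map_sub, map_zero, map_smul, LinearMap.add_apply, LinearMap.sub_apply,
      LinearMap.zero_apply, LinearMap.map_smul, smul_zero, add_zero, zero_add]
    constructor
    · rw [key]
      simp only [map_add, map_smul]
      abel
    · trivial
  · intro hN u v w
    have key := hN (0, u) (0, v) (0, w)
    simp only [sdBr, Prod.mk.injEq, map_add, map_sub, map_zero, map_smul,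
      LinearMap.add_apply, LinearMap.sub_apply, LinearMap.zero_apply,
      LinearMap.map_smul, smul_zero, add_zero, zero_add, zero_sub, sub_zero,
      neg_zero, Prod.fst_add, Prod.snd_add, Prod.fst_sub, Prod.snd_sub] at key
    rw [key.1]
    simp only [map_add, map_smul]
    abel
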